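/- arXiv:1911.06790 — 5 statements merged into one kernel-verified Lean document; each statement's English description precedes it below -/
import Mathlib

section
/- Let G be a superconcentrator with N input nodes I and N output nodes O, meaning that for every pair of subsets S₁ ⊆ I, S₂ ⊆ O with |S₁| = |S₂| = k there exist k vertex-disjoint paths from S₁ to S₂. Then for any set of vertices S and any Y ⊆ O with |S| < |Y|, the number of input nodes that are ancestors of Y in the graph G − S is at least N − |S|. -/
open scoped Classical

/-- Superconcentrator ancestors lemma: if `G` is a superconcentrator with
input set `I` and output set `O` of size `N` (for every `k` and every pair of
`k`-subsets `S₁ ⊆ I`, `S₂ ⊆ O` there are `k` vertex-disjoint directed paths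
from `S₁` to `S₂`), then for any vertex set `S` and any `Y ⊆ O` with
`|S| < |Y|`, at least `N − |S|` input nodes are ancestors of `Y` in `G − S`. -/
theorem stmt_0 {V : Type*} [Fintype V] [DecidableEq V] (E : V → V → Prop)
    (I O : Finset V) (N : ℕ) (hI : I.card = N) (hO : O.card = N)
    (hsc : ∀ (k : ℕ) (S₁ S₂ : Finset V), S₁ ⊆ I → S₂ ⊆ O →
      S₁.card = k → S₂.card = k →
      ∃ p : Fin k → List V,
        (∀ i, (p i).Chain' E ∧
          (∃ a, (p i).head? = some a ∧ a ∈ S₁) ∧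
          (∃ b, (p i).getLast? = some b ∧ b ∈ S₂)) ∧
        (∀ i j, i ≠ j → ∀ v, v ∈ p i → v ∉ p j)) :
    ∀ (S Y : Finset V), Y ⊆ O → S.card < Y.card →
      N - S.card ≤
        (I.filter (fun u =>
          ∃ y ∈ Y, ∃ p : List V, p.Chain' E ∧ p.head? = some u ∧
            p.getLast? = some y ∧ ∀ v ∈ p, v ∉ S)).card := by
  intro S Y hYO hSY
  set A := I.filter (fun u =>
      ∃ y ∈ Y, ∃ p : List V, p.Chain' E ∧ p.head? = some u ∧
        p.getLast? = some y ∧ ∀ v ∈ p, v ∉ S) with hA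
  by_contra hcon
  push_neg at hcon
  have hYN : Y.card ≤ N := hO ▸ Finset.card_le_card hYO
  have hAI : A ⊆ I := Finset.filter_subset _ _
  have hAcard : A.card ≤ N := hI ▸ Finset.card_le_card hAI
  set k := S.card + 1 with hk
  -- pick S₂ ⊆ Y of size k
  obtain ⟨S₂, hS₂Y, hS₂card⟩ := Finset.exists_subset_card_eq (s := Y) (n := k) (by omega)
  -- pick S₁ ⊆ I \ A of size k
  have hdiff : k ≤ (I \ A).card := by
    have := Finset.card_sdiff_of_subset hAI
    omega
  obtain ⟨S₁, hS₁d, hS₁card⟩ := Finset.exists_subset_card_eq (s := I \ A) (n := k) hdiff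
  obtain ⟨p, hp, hdisj⟩ := hsc k S₁ S₂ (hS₁d.trans (Finset.sdiff_subset))
    (hS₂Y.trans hYO) hS₁card hS₂card
  -- some path avoids S
  have hex : ∃ i : Fin k, ∀ v ∈ p i, v ∉ S := by
    by_contra hno
    push_neg at hno
    choose f hfp hfS using hno
    have hinj : Function.Injective f := by
      intro i j hij
      by_contra hne
      exact hdisj i j hne (f i) (hfp i) (hij ▸ hfp j)
    have hle : (Finset.univ : Finset (Fin k)).card ≤ S.card :=
      Finset.card_le_card_of_injOn f (fun i _ => hfS i) (fun i _ j _ h => hinj h)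
    simp at hle
    omega
  obtain ⟨i, hi⟩ := hex
  obtain ⟨hchain, ⟨a, hha, haS₁⟩, ⟨b, hhb, hbS₂⟩⟩ := hp i
  have haI : a ∈ I := Finset.mem_sdiff.mp (hS₁d haS₁) |>.1
  have haA : a ∈ A := by
    rw [hA, Finset.mem_filter]
    exact ⟨haI, b, hS₂Y hbS₂, p i, hchain, hha, hhb, hi⟩
  exact (Finset.mem_sdiff.mp (hS₁d haS₁)).2 haA
end

section
/- Any legal (parallel) black pebbling of an (e, d)-depth robust DAG G that places a pebble on every node of G at some point has cumulative cost at least e·d. -/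
/-- A DAG (edge relation `E`) is `(e,d)`-depth robust if for every vertex set
`S` with `|S| ≤ e` there remains a directed path (a list of vertices
consecutive under `E`) avoiding `S` with more than `d` nodes. -/
def DepthRobust {V : Type*} [Fintype V] [DecidableEq V] (E : V → V → Prop)
    (e d : ℕ) : Prop :=
  ∀ S : Finset V, S.card ≤ e →
    ∃ p : List V, p.Chain' E ∧ (∀ v ∈ p, v ∉ S) ∧ d < p.length

/-- A legal (parallel) black pebbling: starts empty, and a newly placed pebble
requires all parents pebbled in the previous round. -/
def LegalPebbling {V : Type*} [DecidableEq V] (E : V → V → Prop)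
    (P : ℕ → Finset V) : Prop :=
  P 0 = ∅ ∧ ∀ t v, v ∈ P (t + 1) → v ∉ P t → ∀ u, E u v → u ∈ P t

private lemma exists_mod_between (a r d : ℕ) (hd : 0 < d) (hr : r < d) :
    ∃ q, a ≤ q ∧ q < a + d ∧ q % d = r := by
  have hmod := Nat.div_add_mod a d
  have hlt := Nat.mod_lt a hd
  by_cases h : a % d ≤ r
  · refine ⟨d * (a / d) + r, by omega, by omega, ?_⟩
    rw [Nat.add_comm, Nat.add_mul_mod_self_left]
    exact Nat.mod_eq_of_lt hr
  · have hexp : d * (a / d + 1) = d * (a / d) + d := by ring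
    refine ⟨d * (a / d + 1) + r, by omega, by omega, ?_⟩
    rw [Nat.add_comm, Nat.add_mul_mod_self_left]
    exact Nat.mod_eq_of_lt hr

private lemma locate (g : ℕ → ℕ) (q : ℕ) :
    ∀ dd : ℕ, g 0 ≤ q → q < g dd → ∃ j, j < dd ∧ g j ≤ q ∧ q < g (j + 1) := by
  intro dd
  induction dd with
  | zero => intro h0 h1; omega
  | succ m ih =>
    intro h0 h1
    by_cases h : q < g m
    · obtain ⟨j, hj, h2, h3⟩ := ih h0 h
      exact ⟨j, by omega, h2, h3⟩
    · exact ⟨m, by omega, by omega, h1⟩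

/-- Any legal parallel black pebbling of an `(e,d)`-depth robust DAG that
pebbles every node at some point has cumulative cost at least `e·d`. -/
theorem stmt_2 {V : Type*} [Fintype V] [DecidableEq V] (E : V → V → Prop)
    (e d : ℕ) (hrob : DepthRobust E e d) (P : ℕ → Finset V) (t : ℕ)
    (hleg : LegalPebbling E P) (hcomp : ∀ v : V, ∃ i ≤ t, v ∈ P i) :
    e * d ≤ ∑ i ∈ Finset.range (t + 1), (P i).card := by
  classical
  rcases Nat.eq_zero_or_pos d with hd | hd
  · simp [hd]
  have hP0 : P 0 = ∅ := hleg.1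
  -- legality at an arbitrary positive time
  have hlegal : ∀ s v, 0 < s → v ∈ P s → v ∉ P (s - 1) → ∀ u, E u v → u ∈ P (s - 1) := by
    intro s v hs hv hnv u hu
    obtain ⟨s', rfl⟩ : ∃ s', s = s' + 1 := ⟨s - 1, by omega⟩
    simpa using hleg.2 s' v (by simpa using hv) (by simpa using hnv) u hu
  -- first pebbling time
  have fpex : ∀ v : V, ∃ i, v ∈ P i := by
    intro v; obtain ⟨i, _, hi⟩ := hcomp v; exact ⟨i, hi⟩
  set fp : V → ℕ := fun v => Nat.find (fpex v) with hfp_def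
  have hfp_mem : ∀ v, v ∈ P (fp v) := fun v => Nat.find_spec (fpex v)
  have hfp_le : ∀ v, fp v ≤ t := by
    intro v; obtain ⟨i, hit, hi⟩ := hcomp v
    exact le_trans (Nat.find_min' (fpex v) hi) hit
  have hfp_pos : ∀ v, 0 < fp v := by
    intro v
    rcases Nat.eq_zero_or_pos (fp v) with h | h
    · exfalso; have := hfp_mem v; rw [h, hP0] at this; simp at this
    · exact h
  have hfp_not : ∀ v, v ∉ P (fp v - 1) := by
    intro v hmem
    have h1 : fp v - 1 < fp v := by have := hfp_pos v; omega
    exact Nat.find_min (fpex v) h1 hmem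
  -- birth of the current run of v ending at time i
  have birthex : ∀ (v : V) (i : ℕ), ∃ s, ∀ m, s ≤ m → m ≤ i → v ∈ P m := by
    intro v i
    exact ⟨i + 1, fun m h1 h2 => absurd (le_trans h1 h2) (by omega)⟩
  set birth : V → ℕ → ℕ := fun v i => Nat.find (birthex v i) with hbirth_def
  have hbirth_run : ∀ v i m, birth v i ≤ m → m ≤ i → v ∈ P m :=
    fun v i => Nat.find_spec (birthex v i)
  have hbirth_le : ∀ v i, v ∈ P i → birth v i ≤ i := by
    intro v i hv
    refine Nat.find_min' (birthex v i) ?_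
    intro m h1 h2
    have : m = i := le_antisymm h2 h1
    rwa [this]
  have hbirth_pos : ∀ v i, 0 < birth v i := by
    intro v i
    rcases Nat.eq_zero_or_pos (birth v i) with h | h
    · exfalso
      have := hbirth_run v i 0 (by omega) (Nat.zero_le i)
      rw [hP0] at this; simp at this
    · exact h
  have hbirth_new : ∀ v i, v ∈ P i → v ∉ P (birth v i - 1) := by
    intro v i hv hmem
    have hpos := hbirth_pos v i
    have hle := hbirth_le v i hv
    have hnot := Nat.find_min (birthex v i) (show birth v i - 1 < birth v i by omega)
    push_neg at hnot
    obtain ⟨m, h1, h2, h3⟩ := hnot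
    rcases Nat.lt_or_ge m (birth v i) with hm | hm
    · have : m = birth v i - 1 := by omega
      rw [this] at h3; exact h3 hmem
    · exact h3 (hbirth_run v i m hm h2)
  -- the set of "new pebble" times
  set F : Finset ℕ :=
    (Finset.range (t + 1)).filter (fun s => 0 < s ∧ ∃ v, v ∈ P s ∧ v ∉ P (s - 1)) with hF_def
  set K := F.card with hK_def
  set iso := F.orderIsoOfFin rfl with hiso_def
  set ss : Fin K → ℕ := fun q => ((iso q : {x // x ∈ F}) : ℕ) with hss_def
  have hss_memF : ∀ q, ss q ∈ F := fun q => (iso q).2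
  have hss_strictMono : StrictMono ss := by
    intro a b hab
    exact Subtype.coe_lt_coe.2 (iso.strictMono hab)
  have hss_le_t : ∀ q, ss q ∈ Finset.range (t + 1) := by
    intro q
    have := hss_memF q
    rw [hF_def, Finset.mem_filter] at this
    exact this.1
  -- residue classes and their pebble unions
  set B : ℕ → Finset (Fin K) :=
    fun r => Finset.univ.filter (fun q => (q : ℕ) % d = r) with hB_def
  set S : ℕ → Finset V := fun r => (B r).biUnion (fun q => P (ss q)) with hS_def
  -- Key claim: each S r is large
  have hkill : ∀ r, r < d → e + 1 ≤ (S r).card := by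
    intro r hr
    by_contra hcon
    push_neg at hcon
    obtain ⟨p, hch, hav, hlen⟩ := hrob (S r) (by omega)
    have hne : p ≠ [] := by
      intro h; rw [h] at hlen; simp at hlen
    set x : ℕ → V := fun j => p.getD j (p.head hne) with hx_def
    have hxget : ∀ j (h : j < p.length), x j = p.get ⟨j, h⟩ := by
      intro j h; simp [hx_def, List.getD_eq_getElem?_getD, List.getElem?_eq_getElem h]
    have hxnot : ∀ j, j ≤ d → x j ∉ S r := by
      intro j hj
      have hjlen : j < p.length := by omega
      rw [hxget j hjlen]
      exact hav _ (List.get_mem p ⟨j, hjlen⟩)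
    have hedge : ∀ j, j < d → E (x j) (x (j + 1)) := by
      intro j hj
      have h1 : j < p.length - 1 := by omega
      have := List.isChain_iff_getElem.1 hch j (by omega)
      rw [hxget j (by omega), hxget (j + 1) (by omega)]
      exact this
    -- descending birth times along the chain (from the top)
    set τ : ℕ → ℕ := fun n =>
      Nat.rec (fp (x d)) (fun j ih => birth (x (d - (j + 1))) (ih - 1)) n with hτ_def
    have hτ0 : τ 0 = fp (x d) := rfl
    have hτs : ∀ j, τ (j + 1) = birth (x (d - (j + 1))) (τ j - 1) := fun j => rfl
    -- invariant
    have hI : ∀ j, j ≤ d →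
        (x (d - j) ∈ P (τ j)) ∧ (x (d - j) ∉ P (τ j - 1)) ∧ 0 < τ j ∧ τ j ≤ t ∧
        (0 < j → τ j ≤ τ (j - 1) - 1 ∧
          ∀ m, τ j ≤ m → m ≤ τ (j - 1) - 1 → x (d - j) ∈ P m) := by
      intro j
      induction j with
      | zero =>
        intro _
        refine ⟨by rw [hτ0]; exact hfp_mem _, by rw [hτ0]; exact hfp_not _,
          by rw [hτ0]; exact hfp_pos _, by rw [hτ0]; exact hfp_le _, by omega⟩
      | succ j ih =>
        intro hjd
        obtain ⟨hmem, hnot, hpos, hlet, _⟩ := ih (by omega)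
        -- the parent is pebbled at time τ j - 1
        have hed : E (x (d - (j + 1))) (x (d - j)) := by
          have h1 : d - (j + 1) < d := by omega
          have h2 : d - (j + 1) + 1 = d - j := by omega
          have := hedge (d - (j + 1)) h1
          rwa [h2] at this
        have hparent : x (d - (j + 1)) ∈ P (τ j - 1) :=
          hlegal (τ j) (x (d - j)) hpos hmem hnot _ hed
        have hble := hbirth_le _ _ hparent
        have hnew := hbirth_new _ _ hparent
        have hbpos := hbirth_pos (x (d - (j + 1))) (τ j - 1)
        refine ⟨?_, ?_, ?_, ?_, ?_⟩
        · rw [hτs j]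
          exact hbirth_run _ _ _ (le_refl _) hble
        · rw [hτs j]; exact hnew
        · rw [hτs j]; exact hbpos
        · rw [hτs j]; omega
        · intro _
          constructor
          · rw [hτs j]; simp only [Nat.add_sub_cancel]; omega
          · intro m h1 h2
            rw [hτs j] at h1
            simp only [Nat.add_sub_cancel] at h2
            exact hbirth_run _ _ _ h1 h2
    -- ascending times
    set σ : ℕ → ℕ := fun j => τ (d - j) with hσ_def
    have hσmono : ∀ j, j < d → σ j < σ (j + 1) := by
      intro j hj
      obtain ⟨_, _, hpos', _, hstep⟩ := hI (d - j) (by omega)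
      have h0 : 0 < d - j := by omega
      obtain ⟨hle', _⟩ := hstep h0
      obtain ⟨_, _, hpos'', _, _⟩ := hI (d - j - 1) (by omega)
      have h2 : σ j = τ (d - j) := rfl
      have h3 : σ (j + 1) = τ (d - (j + 1)) := rfl
      have h4 : d - (j + 1) = d - j - 1 := by omega
      rw [h2, h3, h4]
      omega
    have hσcover : ∀ j, j < d → ∀ m, σ j ≤ m → m ≤ σ (j + 1) - 1 → x j ∈ P m := by
      intro j hj m h1 h2
      obtain ⟨_, _, _, _, hstep⟩ := hI (d - j) (by omega)
      obtain ⟨_, hcov⟩ := hstep (by omega)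
      have hidx : d - (d - j) = j := by omega
      have hidx2 : d - (j + 1) = d - j - 1 := by omega
      rw [hidx] at hcov
      refine hcov m ?_ ?_
      · simpa [hσ_def] using h1
      · simp only [hσ_def, hidx2] at h2; exact h2
    have hσF : ∀ j, j ≤ d → σ j ∈ F := by
      intro j hj
      obtain ⟨hmem, hnot, hpos, hlet, _⟩ := hI (d - j) (by omega)
      have hσj : σ j = τ (d - j) := rfl
      rw [hF_def, Finset.mem_filter, Finset.mem_range, hσj]
      exact ⟨by omega, hpos, ⟨x (d - (d - j)), hmem, hnot⟩⟩
    -- index the σ's inside F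
    set nn : Fin (d + 1) → Fin K :=
      fun j => iso.symm ⟨σ j.1, hσF j.1 (Nat.lt_succ_iff.1 j.2)⟩ with hnn_def
    have hssnn : ∀ j : Fin (d + 1), ss (nn j) = σ j.1 := by
      intro j
      simp [hss_def, hnn_def]
    have hd1 : ∀ j : ℕ, min j d < d + 1 := by
      intro j
      have := min_le_right j d
      omega
    set g : ℕ → ℕ := fun j => (nn ⟨min j d, hd1 j⟩ : ℕ) with hg_def
    have hgss : ∀ j : ℕ, j ≤ d → ss (nn ⟨min j d, hd1 j⟩) = σ j := by
      intro j hj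
      rw [hssnn]
      simp [Nat.min_eq_left hj]
    have hgmono : ∀ j, j < d → g j < g (j + 1) := by
      intro j hj
      have h1 : ss (nn ⟨min j d, hd1 j⟩) < ss (nn ⟨min (j + 1) d, hd1 (j + 1)⟩) := by
        rw [hgss j (by omega), hgss (j + 1) (by omega)]
        exact hσmono j hj
      exact hss_strictMono.lt_iff_lt.1 h1
    have hgrow : ∀ j, j ≤ d → g 0 + j ≤ g j := by
      intro j
      induction j with
      | zero => intro _; omega
      | succ m ih =>
        intro hm
        have h1 := ih (by omega)
        have h2 := hgmono m (by omega)
        omega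
    -- pick the boundary index
    obtain ⟨qv, hq1, hq2, hq3⟩ := exists_mod_between (g 0) r d hd hr
    have hqK : qv < K := by
      have h1 := hgrow d (le_refl d)
      have h2 := (nn ⟨min d d, hd1 d⟩).2
      have h3 : g d = (nn ⟨min d d, hd1 d⟩ : ℕ) := rfl
      omega
    set q : Fin K := ⟨qv, hqK⟩ with hq_def
    -- locate the chain gap containing qv
    obtain ⟨j, hjd, hle, hlt⟩ := locate g qv d hq1 (by
      have h1 := hgrow d (le_refl d)
      omega)
    -- x j is pebbled at time ss q, which lies in the residue class r
    have hqval : (q : ℕ) = qv := rfl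
    have hnle : nn ⟨min j d, hd1 j⟩ ≤ q := by
      rw [Fin.le_def]
      exact hle
    have hnlt : q < nn ⟨min (j + 1) d, hd1 (j + 1)⟩ := by
      rw [Fin.lt_def]
      exact hlt
    have hxj : x j ∈ P (ss q) := by
      refine hσcover j hjd (ss q) ?_ ?_
      · have h1 : ss (nn ⟨min j d, hd1 j⟩) ≤ ss q := hss_strictMono.monotone hnle
        rwa [hgss j (by omega)] at h1
      · have h1 : ss q < ss (nn ⟨min (j + 1) d, hd1 (j + 1)⟩) := hss_strictMono hnlt
        rw [hgss (j + 1) (by omega)] at h1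
        omega
    have hxjS : x j ∈ S r := by
      rw [hS_def]
      refine Finset.mem_biUnion.2 ⟨q, ?_, hxj⟩
      rw [hB_def]
      exact Finset.mem_filter.2 ⟨Finset.mem_univ _, hq3⟩
    exact hxnot j (by omega) hxjS
  -- assemble the sums
  have hinj : Function.Injective ss := hss_strictMono.injective
  calc e * d ≤ d * (e + 1) := by nlinarith
    _ = ∑ _r ∈ Finset.range d, (e + 1) := by
        rw [Finset.sum_const, Finset.card_range, smul_eq_mul]
    _ ≤ ∑ r ∈ Finset.range d, (S r).card :=
        Finset.sum_le_sum (fun r hrr => hkill r (Finset.mem_range.1 hrr))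
    _ ≤ ∑ r ∈ Finset.range d, ∑ q ∈ B r, (P (ss q)).card :=
        Finset.sum_le_sum (fun r _ => Finset.card_biUnion_le)
    _ = ∑ q : Fin K, (P (ss q)).card := by
        refine Finset.sum_fiberwise_of_maps_to ?_ _
        intro q _
        exact Finset.mem_range.2 (Nat.mod_lt _ hd)
    _ = ∑ s ∈ Finset.univ.image ss, (P s).card := by
        rw [Finset.sum_image (fun a _ b _ h => hinj h)]
    _ ≤ ∑ i ∈ Finset.range (t + 1), (P i).card := by
        refine Finset.sum_le_sum_of_subset ?_
        intro s hs
        obtain ⟨q, _, rfl⟩ := Finset.mem_image.1 hs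
        exact hss_le_t q
end

section
/- Suppose at time t a pebbling configuration P on the graph G₄ of the ciMHF construction has fewer than γN/4 pebbles, where γ is the grates constant. Consider the next s = N/k consecutive nodes of the final layer, whose dynamic parents consist of exactly one uniformly random node from each of the N/k blocks of the output set of G₃. Then with probability at least 1 − (1 − c)^{N/k}, at least one of these parents is a node that is c-good with respect to P and not in P. -/
open scoped Classical

lemma stmt_7_aux (k m : ℕ) (hk : 0 < k) (hm : 0 < m)
    (c : ℝ) (hc1 : c < 1)
    (Good : Fin m → Finset (Fin k))
    (hgood : c * ((m : ℝ) * k) ≤ ∑ j, ((Good j).card : ℝ)) :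
    (1 - (1 - c) ^ m) * (k : ℝ) ^ m ≤
      ((Finset.univ.filter
        (fun f : Fin m → Fin k => ∃ j, f j ∈ Good j)).card : ℝ) := by
  have hgk : ∀ j, (Good j).card ≤ k := fun j => by
    simpa using Finset.card_le_univ (Good j)
  have hcompl : (Finset.univ.filter
      (fun f : Fin m → Fin k => ¬ ∃ j, f j ∈ Good j)).card
      = ∏ j, ((Good j)ᶜ.card) := by
    rw [← Fintype.card_piFinset]
    congr 1
    ext f
    simp [Fintype.mem_piFinset]
  have hsplit := Finset.card_filter_add_card_filter_not
    (s := (Finset.univ : Finset (Fin m → Fin k)))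
    (p := fun f : Fin m → Fin k => ∃ j, f j ∈ Good j)
  rw [hcompl] at hsplit
  have htot : (Finset.univ : Finset (Fin m → Fin k)).card = k ^ m := by
    simp [Finset.card_univ]
  rw [htot] at hsplit
  set z : Fin m → ℝ := fun j => (k : ℝ) - ((Good j).card : ℝ) with hzdef
  have hz : ∀ j, 0 ≤ z j := fun j => by
    have := hgk j
    simp only [hzdef, sub_nonneg]
    exact_mod_cast this
  have hcard : ∀ j, (((Good j)ᶜ.card : ℕ) : ℝ) = z j := fun j => by
    rw [Finset.card_compl]
    simp [hzdef, Nat.cast_sub (hgk j)]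
  have hw' : ∑ _j : Fin m, (m : ℝ)⁻¹ = 1 := by
    rw [Finset.sum_const, Finset.card_univ, Fintype.card_fin, nsmul_eq_mul]
    field_simp
  have hAMGM := Real.geom_mean_le_arith_mean_weighted Finset.univ
    (fun _ => (m : ℝ)⁻¹) z (fun _ _ => by positivity) hw' (fun j _ => hz j)
  have hminv : (0:ℝ) < (m : ℝ) := by exact_mod_cast hm
  have hsum : ∑ j, ((m : ℝ)⁻¹ * z j) ≤ (1 - c) * k := by
    rw [← Finset.mul_sum]
    have hzsum : ∑ j, z j ≤ (1 - c) * m * k := by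
      have : ∑ j, z j = (m : ℝ) * k - ∑ j, ((Good j).card : ℝ) := by
        simp [hzdef, Finset.sum_sub_distrib, Finset.card_univ, mul_comm]
      rw [this]
      nlinarith [hgood]
    rw [inv_mul_le_iff₀ hminv]
    nlinarith
  have hprod : ∏ j, z j ≤ ((1 - c) * k) ^ m := by
    have h1 : ∏ j, z j = (∏ j, z j ^ ((m : ℝ))⁻¹) ^ m := by
      rw [← Finset.prod_pow]
      refine Finset.prod_congr rfl fun j _ => ?_
      rw [← Real.rpow_natCast (z j ^ ((m : ℝ))⁻¹) m, ← Real.rpow_mul (hz j),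
        inv_mul_cancel₀ (by exact_mod_cast hm.ne'), Real.rpow_one]
    rw [h1]
    have hbase : 0 ≤ ∏ j, z j ^ ((m : ℝ))⁻¹ :=
      Finset.prod_nonneg fun j _ => Real.rpow_nonneg (hz j) _
    exact pow_le_pow_left₀ hbase (hAMGM.trans hsum) m
  have hcast : ((∏ j, ((Good j)ᶜ.card) : ℕ) : ℝ) = ∏ j, z j := by
    push_cast
    exact Finset.prod_congr rfl fun j _ => hcard j
  have hsplitR : ((Finset.univ.filter
      (fun f : Fin m → Fin k => ∃ j, f j ∈ Good j)).card : ℝ)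
      = (k : ℝ) ^ m - ∏ j, z j := by
    have := congrArg (Nat.cast : ℕ → ℝ) hsplit
    push_cast at this
    rw [← hcast]
    push_cast
    linarith
  rw [hsplitR]
  have : ((1 - c) * k) ^ m = (1 - c) ^ m * (k : ℝ) ^ m := mul_pow _ _ _
  nlinarith [hprod]

/-- Suppose the pebbling configuration `P` has fewer than `γN/4` pebbles, so
that (by the grates property) the blocks of the output set of `G₃` contain in
total at least `cN` nodes that are `c`-good with respect to `P` and not in
`P`; `Good j` denotes these nodes within block `j` (each block has size `k`,
and there are `N/k` blocks). The next `s = N/k` final-layer nodes each draw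
one uniformly random parent from their respective block, independently. Then
with probability at least `1 − (1 − c)^{N/k}`, at least one of these parents
lands on a `c`-good node outside `P`: the number of favourable choice vectors
is at least `(1 − (1 − c)^{N/k})·k^{N/k}`. -/
theorem stmt_7 {V : Type*} [Fintype V] [DecidableEq V]
    (N k : ℕ) (hk : 0 < k) (hdvd : k ∣ N) (hN : 0 < N)
    (c γ : ℝ) (hc : 0 < c) (hc1 : c < 1) (hγ : 0 < γ)
    (P : Finset V) (hP : (P.card : ℝ) < γ * N / 4)
    (Good : Fin (N / k) → Finset (Fin k))
    (hgood : c * N ≤ ∑ j, ((Good j).card : ℝ)) :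
    (1 - (1 - c) ^ (N / k)) * (k : ℝ) ^ (N / k) ≤
      ((Finset.univ.filter
        (fun f : Fin (N / k) → Fin k => ∃ j, f j ∈ Good j)).card : ℝ) := by
  have hm : 0 < N / k := Nat.div_pos (Nat.le_of_dvd hN hdvd) hk
  have hmk : (N / k) * k = N := Nat.div_mul_cancel hdvd
  refine stmt_7_aux k (N / k) hk hm c hc1 Good ?_
  have : ((N / k : ℕ) : ℝ) * k = (N : ℝ) := by exact_mod_cast hmk
  rw [this]
  exact hgood
end

section
/- Repebbling the ancestors of a missed costly index costs at least (3xy/8)·N^{2−ε}: if the grates graph G₁ is (xN, yN^{1−ε})-depth robust, at least (x − c)N − |P| of its nodes must be repebbled where |P| < xN/8 and c < x/2, and repebbling an (e', d')-depth-robust remainder costs at least e'·d'. -/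
section Aux

variable {V : Type*} [DecidableEq V]

/-- If `v` is on the board at round `b` but not at round `0`, then the presence
interval of `v` ending at `b` has a well-defined start `a ≥ 1`: `v` is on the
board throughout `[a, b]` but not at round `a - 1`. -/
lemma presence_interval (P : ℕ → Finset V) (v : V) (h0 : v ∉ P 0) :
    ∀ b, v ∈ P b → ∃ a, 0 < a ∧ a ≤ b ∧ v ∉ P (a - 1) ∧ ∀ r, a ≤ r → r ≤ b → v ∈ P r := by
  intro b
  induction b with
  | zero => intro hb; exact absurd hb h0
  | succ n ih =>
    intro hb
    by_cases hn : v ∈ P n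
    · obtain ⟨a, ha0, han, hnot, hcov⟩ := ih hn
      refine ⟨a, ha0, han.trans (Nat.le_succ n), hnot, fun r h1 h2 => ?_⟩
      by_cases hr : r ≤ n
      · exact hcov r h1 hr
      · have : r = n + 1 := by omega
        exact this ▸ hb
    · refine ⟨n + 1, Nat.succ_pos n, le_refl _, by simpa using hn, fun r h1 h2 => ?_⟩
      have : r = n + 1 := le_antisymm h2 h1
      exact this ▸ hb

/-- Key covering lemma: if `p` is a legal chain (w.r.t. `E`) of vertices none of
which carries an initial pebble, and the last vertex of `p` is pebbled at round
`b`, then there is a starting round `a` with `a + p.length ≤ b + 1` such that at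
every round of the interval `[a, b]` some vertex of `p` is on the board. -/
lemma chain_cover (E : V → V → Prop) (P : ℕ → Finset V)
    (hleg : ∀ s v, v ∈ P (s + 1) → v ∉ P s → ∀ u, E u v → u ∈ P s) :
    ∀ p : List V, p.Chain' E → (∀ v ∈ p, v ∉ P 0) →
      ∀ (b : ℕ) (vL : V), p.getLast? = some vL → vL ∈ P b →
      ∃ a, a + p.length ≤ b + 1 ∧ ∀ r, a ≤ r → r ≤ b → ∃ v ∈ p, v ∈ P r := by
  intro p
  induction p using List.reverseRecOn with
  | nil => intro _ _ b vL h; simp at h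
  | append_singleton q x ih =>
    intro hchain hmem b vL hlast hb
    rw [List.getLast?_concat] at hlast
    have hxv : x = vL := by simpa using hlast
    subst hxv
    have hx0 : x ∉ P 0 := hmem x (by simp)
    obtain ⟨a₁, ha₁0, ha₁b, hnot, hcov₁⟩ := presence_interval P x hx0 b hb
    rcases eq_or_ne q [] with hq | hq
    · subst hq
      refine ⟨a₁, by simp; omega, fun r h1 h2 => ⟨x, by simp, hcov₁ r h1 h2⟩⟩
    · -- the predecessor of x in the chain
      set u := q.getLast hq with hu
      have hEu : E u x := by
        have h := (List.isChain_append.mp hchain).2.2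
        exact h u (Option.mem_def.mpr (List.getLast?_eq_getLast hq)) x
          (Option.mem_def.mpr rfl)
      have hxP : x ∈ P ((a₁ - 1) + 1) := by
        have : (a₁ - 1) + 1 = a₁ := by omega
        rw [this]
        exact hcov₁ a₁ le_rfl ha₁b
      have huP : u ∈ P (a₁ - 1) := hleg (a₁ - 1) x hxP hnot u hEu
      have hchq : q.Chain' E := (List.isChain_append.mp hchain).1
      have hmemq : ∀ v ∈ q, v ∉ P 0 := fun v hv => hmem v (by simp [hv])
      obtain ⟨a, hlen, hcov⟩ := ih hchq hmemq (a₁ - 1) u (List.getLast?_eq_getLast hq) huP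
      refine ⟨a, ?_, ?_⟩
      · have hlq : (q ++ [x]).length = q.length + 1 := by simp
        omega
      · intro r h1 h2
        by_cases hr : r ≤ a₁ - 1
        · obtain ⟨v, hv, hvP⟩ := hcov r h1 hr
          exact ⟨v, by simp [hv], hvP⟩
        · have : a₁ ≤ r := by omega
          exact ⟨x, by simp, hcov₁ r this h2⟩

/-- In any window of `L` consecutive naturals there is a number of any given
residue mod `L`. -/
lemma exists_mod_in_window (a L φ : ℕ) (hL : 0 < L) (hφ : φ < L) :
    ∃ r, a ≤ r ∧ r < a + L ∧ r % L = φ := by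
  have hdm : L * (a / L) + a % L = a := Nat.div_add_mod a L
  have hm : a % L < L := Nat.mod_lt _ hL
  rcases le_or_gt (a % L) φ with h | h
  · refine ⟨L * (a / L) + φ, by omega, by omega, ?_⟩
    rw [Nat.mul_add_mod]
    exact Nat.mod_eq_of_lt hφ
  · refine ⟨L * (a / L) + (L + φ), by omega, by omega, ?_⟩
    rw [Nat.mul_add_mod, Nat.add_mod_left]
    exact Nat.mod_eq_of_lt hφ

end Aux

/-- Repebbling the ancestors of a missed costly index is expensive: suppose the
set `T` of nodes of the grates graph `G₁` that must be repebbled satisfies the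
depth-robustness property inherited from the `(xN, yN^{1−ε})`-depth robustness
of `G₁`, namely: after removing any set `S` of at most `(x − c)·N − |P₀|`
vertices (together with the initial pebbles `P₀`), `T` still contains a
directed path of more than `y·N^{1−ε}` nodes. If `|P₀| < xN/8` and `c < x/2`,
then any legal pebbling starting from `P₀` that pebbles all of `T` has
cumulative cost at least `(3xy/8)·N^{2−ε}` (using that completely pebbling an
`(e′,d′)`-depth robust graph costs at least `e′·d′`). -/
theorem stmt_10 {V : Type*} [Fintype V] [DecidableEq V] (E : V → V → Prop)
    (N x y c ε : ℝ) (hN : 0 < N) (hx : 0 < x) (hy : 0 < y)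
    (hc : 0 < c) (hcx : c < x / 2) (hε : 0 < ε) (hε1 : ε < 1)
    (P₀ : Finset V) (hP₀ : (P₀.card : ℝ) < x * N / 8)
    (T : Finset V)
    (hrob : ∀ S : Finset V, (S.card : ℝ) ≤ (x - c) * N - P₀.card →
      ∃ p : List V, p.Chain' E ∧
        (∀ v ∈ p, v ∈ T ∧ v ∉ S ∧ v ∉ P₀) ∧
        y * N ^ (1 - ε) < (p.length : ℝ))
    (P : ℕ → Finset V) (t : ℕ) (hstart : P 0 = P₀)
    (hleg : ∀ s v, v ∈ P (s + 1) → v ∉ P s → ∀ u, E u v → u ∈ P s)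
    (hcomp : ∀ v ∈ T, ∃ s ≤ t, v ∈ P s) :
    (3 * x * y / 8) * N ^ (2 - ε)
      ≤ ∑ s ∈ Finset.range (t + 1), ((P s).card : ℝ) := by
  classical
  set d : ℝ := y * N ^ (1 - ε) with hd
  set L : ℕ := ⌊d⌋₊ + 1 with hLdef
  have hL0 : 0 < L := Nat.succ_pos _
  have hd0 : 0 < d := mul_pos hy (Real.rpow_pos_of_pos hN _)
  have hdL : d < (L : ℝ) := by
    have h := Nat.lt_floor_add_one d
    rw [hLdef]
    push_cast
    linarith
  -- the residue-class hitting sets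
  set B : ℕ → Finset V :=
    fun φ => Finset.univ.filter (fun v => ∃ r, r ≤ t ∧ r % L = φ ∧ v ∈ P r) with hB
  -- each hitting set is large
  have hBlow : ∀ φ, φ < L → (x - c) * N - P₀.card < ((B φ).card : ℝ) := by
    intro φ hφ
    by_contra hcon
    push_neg at hcon
    obtain ⟨p, hchain, hmem, hlen⟩ := hrob (B φ) hcon
    have hpL : L ≤ p.length := by
      have hfl : ⌊d⌋₊ < p.length := by
        rw [Nat.floor_lt hd0.le]
        exact_mod_cast hlen
      omega
    have hne : p ≠ [] := by
      rw [← List.length_pos_iff]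
      omega
    set vL := p.getLast hne with hvL
    have hvLT : vL ∈ T := (hmem vL (List.getLast_mem hne)).1
    obtain ⟨s, hst, hs⟩ := hcomp vL hvLT
    have hmem0 : ∀ v ∈ p, v ∉ P 0 := fun v hv => by
      rw [hstart]; exact (hmem v hv).2.2
    obtain ⟨a, halen, hcov⟩ :=
      chain_cover E P hleg p hchain hmem0 s vL (List.getLast?_eq_getLast hne) hs
    obtain ⟨r, har, harL, hrmod⟩ := exists_mod_in_window a L φ hL0 hφ
    have hrs : r ≤ s := by omega
    obtain ⟨v, hvp, hvP⟩ := hcov r har hrs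
    have hvB : v ∈ B φ :=
      Finset.mem_filter.mpr ⟨Finset.mem_univ v, r, hrs.trans hst, hrmod, hvP⟩
    exact (hmem v hvp).2.1 hvB
  -- the total size of the hitting sets is at most the cumulative cost
  have hBsum : ∑ φ ∈ Finset.range L, ((B φ).card : ℝ)
      ≤ ∑ s ∈ Finset.range (t + 1), ((P s).card : ℝ) := by
    have hnat : ∑ φ ∈ Finset.range L, (B φ).card
        ≤ ∑ s ∈ Finset.range (t + 1), (P s).card := by
      calc ∑ φ ∈ Finset.range L, (B φ).card
          ≤ ∑ φ ∈ Finset.range L,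
              ∑ s ∈ (Finset.range (t + 1)).filter (fun s => s % L = φ), (P s).card := by
            apply Finset.sum_le_sum
            intro φ _
            have hsub : B φ ⊆
                ((Finset.range (t + 1)).filter (fun s => s % L = φ)).biUnion P := by
              intro v hv
              obtain ⟨-, r, hrt, hrm, hvP⟩ := Finset.mem_filter.mp hv
              exact Finset.mem_biUnion.mpr
                ⟨r, Finset.mem_filter.mpr ⟨Finset.mem_range.mpr (by omega), hrm⟩, hvP⟩
            exact (Finset.card_le_card hsub).trans Finset.card_biUnion_le
        _ = ∑ s ∈ Finset.range (t + 1), (P s).card := by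
            apply Finset.sum_fiberwise_of_maps_to
            intro s _
            exact Finset.mem_range.mpr (Nat.mod_lt _ hL0)
    exact_mod_cast hnat
  -- arithmetic assembly
  have hcN : c * N < x / 2 * N := mul_lt_mul_of_pos_right hcx hN
  have hexp : (x - c) * N = x * N - c * N := by ring
  have he : 3 * x / 8 * N < (x - c) * N - P₀.card := by
    rw [hexp]; linarith
  have h38 : 0 < 3 * x / 8 * N := by positivity
  have hepos : 0 ≤ (x - c) * N - P₀.card := by linarith
  calc (3 * x * y / 8) * N ^ (2 - ε)
      = (3 * x / 8 * N) * d := by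
        rw [hd]
        have h2 : (2 : ℝ) - ε = 1 + (1 - ε) := by ring
        rw [h2, Real.rpow_add hN, Real.rpow_one]
        ring
    _ ≤ ((x - c) * N - P₀.card) * d := mul_le_mul_of_nonneg_right he.le hd0.le
    _ ≤ ((x - c) * N - P₀.card) * L := mul_le_mul_of_nonneg_left hdL.le hepos
    _ = ∑ _φ ∈ Finset.range L, ((x - c) * N - (P₀.card : ℝ)) := by
        rw [Finset.sum_const, Finset.card_range, nsmul_eq_mul, mul_comm]
    _ ≤ ∑ φ ∈ Finset.range L, ((B φ).card : ℝ) :=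
        Finset.sum_le_sum fun φ hφ => (hBlow φ (Finset.mem_range.mp hφ)).le
    _ ≤ ∑ s ∈ Finset.range (t + 1), ((P s).card : ℝ) := hBsum
end

section
/- Hybrid reduction for adaptive security: if an evaluation algorithm MHF.Eval has (t, ε)-single security, then it has (t − O(r · time(MHF.Eval)), r, r·ε)-adaptive security. Concretely, any adversary making r adaptive rounds and winning the adaptive data-independency game with advantage greater than r·ε, running in time t − O(r · time(MHF.Eval)), yields a single-round adversary running in time t with advantage greater than ε. -/
/-- Success probability of a single-round adversary `(x₀, x₁, guess)` in the
data-independency game: the challenger picks a uniform bit `b` and uniform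
coins, computes the leakage patterns `lp₀, lp₁` of `Eval x₀`, `Eval x₁`, sends
`(lp_b, lp_{1−b})`, and the adversary wins if `guess` returns `b`. -/
noncomputable def singleSucc {Input Coins LP : Type*} [Fintype Coins]
    (Eval : Input → Coins → LP) (x0 x1 : Input)
    (guess : LP → LP → Bool) : ℝ :=
  (∑ b : Bool, ∑ c0 : Coins, ∑ c1 : Coins,
      if guess (if b then Eval x1 c1 else Eval x0 c0)
          (if b then Eval x0 c0 else Eval x1 c1) = b then (1 : ℝ) else 0) /
    (2 * (Fintype.card Coins) ^ 2)

/-- One adaptive run: in each round the (deterministic) adaptive adversary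
`q` chooses a pair of inputs from the history of leakage-pattern pairs, and
the challenger answers with `(lp_b, lp_{1−b})` using fresh coins. -/
def runAdaptive {Input Coins LP : Type*} (Eval : Input → Coins → LP)
    (q : List (LP × LP) → Input × Input) (b : Bool)
    (cs : List (Coins × Coins)) : List (LP × LP) :=
  cs.foldl (fun h c =>
    h ++ [if b then (Eval (q h).2 c.2, Eval (q h).1 c.1)
          else (Eval (q h).1 c.1, Eval (q h).2 c.2)]) []

/-- Success probability of an `r`-round adaptive adversary `(q, guess)`:
probability over the uniform hidden bit `b` and the `r` rounds of uniform
fresh coins that the adversary guesses `b` from the transcript. -/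
noncomputable def adaptSucc {Input Coins LP : Type*} [Fintype Coins]
    (Eval : Input → Coins → LP) (r : ℕ)
    (q : List (LP × LP) → Input × Input)
    (guess : List (LP × LP) → Bool) : ℝ :=
  (∑ b : Bool, ∑ cs : Fin r → Coins × Coins,
      if guess (runAdaptive Eval q b (List.ofFn cs)) = b
      then (1 : ℝ) else 0) /
    (2 * ((Fintype.card Coins) ^ 2) ^ r)

section Hybrid

variable {Input Coins LP : Type*} [Fintype Coins]

/-- One step of an adaptive run, with an explicit per-round bit. -/
def hstep (Eval : Input → Coins → LP) (q : List (LP × LP) → Input × Input)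
    (h : List (LP × LP)) (bc : Bool × Coins × Coins) : List (LP × LP) :=
  h ++ [if bc.1 then (Eval (q h).2 bc.2.2, Eval (q h).1 bc.2.1)
        else (Eval (q h).1 bc.2.1, Eval (q h).2 bc.2.2)]

/-- Probability (over `n` rounds of fresh coins) that `guess` outputs `true`
on the transcript extending `h` by `n` rounds, all with bit `a`. -/
noncomputable def hybS (Eval : Input → Coins → LP)
    (q : List (LP × LP) → Input × Input) (guess : List (LP × LP) → Bool)
    (a : Bool) (n : ℕ) (h : List (LP × LP)) : ℝ :=
  (∑ cs : Fin n → Coins × Coins,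
      if guess (List.foldl (hstep Eval q) h (List.ofFn fun j => (a, cs j))) = true
      then (1 : ℝ) else 0) / ((Fintype.card Coins : ℝ) ^ 2) ^ n

lemma hybS_zero (Eval : Input → Coins → LP) (q : List (LP × LP) → Input × Input)
    (guess : List (LP × LP) → Bool) (a : Bool) (h : List (LP × LP)) :
    hybS Eval q guess a 0 h = if guess h = true then 1 else 0 := by
  simp [hybS]

lemma hybS_succ (Eval : Input → Coins → LP) (q : List (LP × LP) → Input × Input)
    (guess : List (LP × LP) → Bool) (a : Bool) (n : ℕ) (h : List (LP × LP)) :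
    hybS Eval q guess a (n + 1) h
      = (∑ c : Coins × Coins, hybS Eval q guess a n (hstep Eval q h (a, c)))
          / (Fintype.card Coins : ℝ) ^ 2 := by
  have key : (∑ cs : Fin (n + 1) → Coins × Coins,
        if guess (List.foldl (hstep Eval q) h (List.ofFn fun j => (a, cs j))) = true
        then (1 : ℝ) else 0)
      = ∑ c : Coins × Coins, ∑ cs : Fin n → Coins × Coins,
          if guess (List.foldl (hstep Eval q) (hstep Eval q h (a, c))
              (List.ofFn fun j => (a, cs j))) = true then (1 : ℝ) else 0 := by
    have h2 := Fintype.sum_prod_type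
      (fun p : (Coins × Coins) × (Fin n → Coins × Coins) =>
        if guess (List.foldl (hstep Eval q) (hstep Eval q h (a, p.1))
            (List.ofFn fun j => (a, p.2 j))) = true then (1 : ℝ) else 0)
    rw [← h2]
    refine (Fintype.sum_equiv (Fin.consEquiv fun _ => Coins × Coins) _ _ fun p => ?_).symm
    congr 1
    rw [List.ofFn_succ]
    simp [Fin.consEquiv]
  unfold hybS
  rw [key, Finset.sum_div, Finset.sum_div]
  congr 1
  ext c
  rw [div_div, ← pow_succ]

/-- For a fixed continuation, the signed difference of acceptance counts
between a true round and a false round is bounded via the single game. -/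
lemma count_diff_bound [Nonempty Coins] (Eval : Input → Coins → LP)
    (q : List (LP × LP) → Input × Input) (guess : List (LP × LP) → Bool)
    (ε : ℝ)
    (hsingle : ∀ (x0 x1 : Input) (g : LP → LP → Bool),
      |singleSucc Eval x0 x1 g - 1 / 2| ≤ ε)
    (h : List (LP × LP)) (cont : List (LP × LP) → List (LP × LP)) :
    |∑ c : Coins × Coins,
        ((if guess (cont (hstep Eval q h (true, c))) = true then (1 : ℝ) else 0)
          - (if guess (cont (hstep Eval q h (false, c))) = true then (1 : ℝ) else 0))|
      ≤ 2 * (Fintype.card Coins : ℝ) ^ 2 * ε := by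
  classical
  set M : ℝ := (Fintype.card Coins : ℝ) with hMdef
  have hM : 0 < M := by
    simp only [hMdef]
    exact_mod_cast Fintype.card_pos
  set x0 := (q h).1
  set x1 := (q h).2
  set sg : LP → LP → Bool := fun lp lp' => guess (cont (h ++ [(lp, lp')])) with hsg
  have hs := hsingle x0 x1 sg
  set T : ℝ := ∑ c : Coins × Coins,
      (if sg (Eval x1 c.2) (Eval x0 c.1) = true then (1 : ℝ) else 0) with hT
  set F : ℝ := ∑ c : Coins × Coins,
      (if sg (Eval x0 c.1) (Eval x1 c.2) = true then (1 : ℝ) else 0) with hF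
  have hsum : ∑ c : Coins × Coins,
        ((if guess (cont (hstep Eval q h (true, c))) = true then (1 : ℝ) else 0)
          - (if guess (cont (hstep Eval q h (false, c))) = true then (1 : ℝ) else 0))
      = T - F := by
    rw [hT, hF, ← Finset.sum_sub_distrib]
    refine Finset.sum_congr rfl fun c _ => ?_
    simp [hstep, hsg, x0, x1]
  rw [hsum]
  have hcard : ∑ c0 : Coins, ∑ c1 : Coins, (1 : ℝ) = M ^ 2 := by
    simp [hMdef]
    ring
  have hval : singleSucc Eval x0 x1 sg = (T + (M ^ 2 - F)) / (2 * M ^ 2) := by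
    unfold singleSucc
    rw [Fintype.sum_bool]
    simp only [if_true, Bool.false_eq_true, if_false]
    have h1 : ∑ c0 : Coins, ∑ c1 : Coins,
        (if sg (Eval x1 c1) (Eval x0 c0) = true then (1 : ℝ) else 0) = T := by
      rw [hT, Fintype.sum_prod_type]
    have h2 : ∑ c0 : Coins, ∑ c1 : Coins,
        (if sg (Eval x0 c0) (Eval x1 c1) = false then (1 : ℝ) else 0) = M ^ 2 - F := by
      rw [hF, Fintype.sum_prod_type, ← hcard, ← Finset.sum_sub_distrib]
      refine Finset.sum_congr rfl fun c0 _ => ?_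
      rw [← Finset.sum_sub_distrib]
      refine Finset.sum_congr rfl fun c1 _ => ?_
      cases hb : sg (Eval x0 c0) (Eval x1 c1) <;> simp
    rw [h1, h2]
  rw [hval] at hs
  have heq : (T + (M ^ 2 - F)) / (2 * M ^ 2) - 1 / 2 = (T - F) / (2 * M ^ 2) := by
    field_simp
    ring
  rw [heq, abs_div, abs_of_pos (by positivity : (0:ℝ) < 2 * M ^ 2),
    div_le_iff₀ (by positivity : (0:ℝ) < 2 * M ^ 2)] at hs
  calc |T - F| ≤ ε * (2 * M ^ 2) := hs
    _ = 2 * M ^ 2 * ε := by ring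

/-- The middle (reduction) term of one hybrid step is bounded by `2ε`
before dividing by the round's coin count. -/
lemma middle_bound [Nonempty Coins] (Eval : Input → Coins → LP)
    (q : List (LP × LP) → Input × Input) (guess : List (LP × LP) → Bool)
    (ε : ℝ)
    (hsingle : ∀ (x0 x1 : Input) (g : LP → LP → Bool),
      |singleSucc Eval x0 x1 g - 1 / 2| ≤ ε)
    (n : ℕ) (h : List (LP × LP)) :
    |∑ c : Coins × Coins,
        (hybS Eval q guess false n (hstep Eval q h (true, c))
          - hybS Eval q guess false n (hstep Eval q h (false, c)))|
      ≤ 2 * (Fintype.card Coins : ℝ) ^ 2 * ε := by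
  classical
  set M : ℝ := (Fintype.card Coins : ℝ) with hMdef
  have hM : 0 < M := by
    simp only [hMdef]
    exact_mod_cast Fintype.card_pos
  have hD : (0:ℝ) < (M ^ 2) ^ n := by positivity
  have hswap : ∑ c : Coins × Coins,
        (hybS Eval q guess false n (hstep Eval q h (true, c))
          - hybS Eval q guess false n (hstep Eval q h (false, c)))
      = (∑ cs : Fin n → Coins × Coins, ∑ c : Coins × Coins,
          ((if guess (List.foldl (hstep Eval q) (hstep Eval q h (true, c))
              (List.ofFn fun j => (false, cs j))) = true then (1:ℝ) else 0)
            - (if guess (List.foldl (hstep Eval q) (hstep Eval q h (false, c))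
              (List.ofFn fun j => (false, cs j))) = true then (1:ℝ) else 0)))
        / (M ^ 2) ^ n := by
    unfold hybS
    conv_rhs => rw [Finset.sum_comm, Finset.sum_div]
    refine Finset.sum_congr rfl fun c _ => ?_
    rw [div_sub_div_same, ← Finset.sum_sub_distrib]
  rw [hswap, abs_div, abs_of_pos hD, div_le_iff₀ hD]
  calc |∑ cs : Fin n → Coins × Coins, ∑ c : Coins × Coins,
          ((if guess (List.foldl (hstep Eval q) (hstep Eval q h (true, c))
              (List.ofFn fun j => (false, cs j))) = true then (1:ℝ) else 0)
            - (if guess (List.foldl (hstep Eval q) (hstep Eval q h (false, c))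
              (List.ofFn fun j => (false, cs j))) = true then (1:ℝ) else 0))|
      ≤ ∑ cs : Fin n → Coins × Coins, |∑ c : Coins × Coins,
          ((if guess (List.foldl (hstep Eval q) (hstep Eval q h (true, c))
              (List.ofFn fun j => (false, cs j))) = true then (1:ℝ) else 0)
            - (if guess (List.foldl (hstep Eval q) (hstep Eval q h (false, c))
              (List.ofFn fun j => (false, cs j))) = true then (1:ℝ) else 0))| :=
      Finset.abs_sum_le_sum_abs _ _
    _ ≤ ∑ _cs : Fin n → Coins × Coins, 2 * M ^ 2 * ε := by
      refine Finset.sum_le_sum fun cs _ => ?_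
      exact count_diff_bound Eval q guess ε hsingle h
        (fun h' => List.foldl (hstep Eval q) h' (List.ofFn fun j => (false, cs j)))
    _ = 2 * M ^ 2 * ε * (M ^ 2) ^ n := by
      rw [Finset.sum_const, Finset.card_univ, nsmul_eq_mul]
      rw [show ((Fintype.card (Fin n → Coins × Coins) : ℝ)) = (M ^ 2) ^ n by
        simp [hMdef, Fintype.card_fun, Fintype.card_prod]
        push_cast
        ring]
      ring

/-- Hybrid telescoping: the all-true and all-false runs differ by at most
`2nε`. -/
lemma hyb_bound [Nonempty Coins] (Eval : Input → Coins → LP)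
    (q : List (LP × LP) → Input × Input) (guess : List (LP × LP) → Bool)
    (ε : ℝ) (hε : 0 ≤ ε)
    (hsingle : ∀ (x0 x1 : Input) (g : LP → LP → Bool),
      |singleSucc Eval x0 x1 g - 1 / 2| ≤ ε)
    (n : ℕ) :
    ∀ h : List (LP × LP),
      |hybS Eval q guess true n h - hybS Eval q guess false n h| ≤ 2 * n * ε := by
  classical
  set M : ℝ := (Fintype.card Coins : ℝ) with hMdef
  have hM : 0 < M := by
    simp only [hMdef]
    exact_mod_cast Fintype.card_pos
  have hM2 : (0:ℝ) < M ^ 2 := by positivity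
  induction n with
  | zero => intro h; simp [hybS_zero]
  | succ n ih =>
    intro h
    rw [hybS_succ, hybS_succ]
    have split :
        (∑ c : Coins × Coins, hybS Eval q guess true n (hstep Eval q h (true, c))) / M ^ 2
          - (∑ c : Coins × Coins, hybS Eval q guess false n (hstep Eval q h (false, c))) / M ^ 2
        = (∑ c : Coins × Coins,
            (hybS Eval q guess true n (hstep Eval q h (true, c))
              - hybS Eval q guess false n (hstep Eval q h (true, c)))) / M ^ 2
          + (∑ c : Coins × Coins,
            (hybS Eval q guess false n (hstep Eval q h (true, c))
              - hybS Eval q guess false n (hstep Eval q h (false, c)))) / M ^ 2 := by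
      rw [Finset.sum_sub_distrib, Finset.sum_sub_distrib]
      ring
    rw [split]
    have h1 : |(∑ c : Coins × Coins,
          (hybS Eval q guess true n (hstep Eval q h (true, c))
            - hybS Eval q guess false n (hstep Eval q h (true, c)))) / M ^ 2|
        ≤ 2 * n * ε := by
      rw [abs_div, abs_of_pos hM2, div_le_iff₀ hM2]
      calc |∑ c : Coins × Coins,
            (hybS Eval q guess true n (hstep Eval q h (true, c))
              - hybS Eval q guess false n (hstep Eval q h (true, c)))|
          ≤ ∑ c : Coins × Coins, |hybS Eval q guess true n (hstep Eval q h (true, c))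
              - hybS Eval q guess false n (hstep Eval q h (true, c))| :=
          Finset.abs_sum_le_sum_abs _ _
        _ ≤ ∑ _c : Coins × Coins, 2 * n * ε :=
          Finset.sum_le_sum fun c _ => ih (hstep Eval q h (true, c))
        _ = 2 * n * ε * M ^ 2 := by
          rw [Finset.sum_const, Finset.card_univ, nsmul_eq_mul]
          rw [show ((Fintype.card (Coins × Coins) : ℝ)) = M ^ 2 by
            simp [hMdef, Fintype.card_prod]; ring]
          ring
    have h2 : |(∑ c : Coins × Coins,
          (hybS Eval q guess false n (hstep Eval q h (true, c))
            - hybS Eval q guess false n (hstep Eval q h (false, c)))) / M ^ 2|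
        ≤ 2 * ε := by
      rw [abs_div, abs_of_pos hM2, div_le_iff₀ hM2]
      calc _ ≤ 2 * M ^ 2 * ε := middle_bound Eval q guess ε hsingle n h
        _ = 2 * ε * M ^ 2 := by ring
    calc |_ + _| ≤ _ + _ := abs_add_le _ _
      _ ≤ 2 * n * ε + 2 * ε := add_le_add h1 h2
      _ = 2 * (n + 1 : ℕ) * ε := by push_cast; ring

end Hybrid

/-- Hybrid reduction, single security implies adaptive security: if every
single-round adversary against `MHF.Eval` has advantage at most `ε`, then
every `r`-round adaptive adversary has advantage at most `r·ε` (equivalently,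
an adaptive adversary with advantage exceeding `r·ε` yields a single-round
adversary with advantage exceeding `ε`, at the cost of simulating the `r`
evaluations of `MHF.Eval`). -/
theorem stmt_14 {Input Coins LP : Type*} [Fintype Coins] [Nonempty Coins]
    (Eval : Input → Coins → LP) (ε : ℝ) (hε : 0 ≤ ε)
    (hsingle : ∀ (x0 x1 : Input) (guess : LP → LP → Bool),
      |singleSucc Eval x0 x1 guess - 1 / 2| ≤ ε)
    (r : ℕ) (q : List (LP × LP) → Input × Input)
    (guess : List (LP × LP) → Bool) :
    |adaptSucc Eval r q guess - 1 / 2| ≤ r * ε := by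
  classical
  set M : ℝ := (Fintype.card Coins : ℝ) with hMdef
  have hM : 0 < M := by
    simp only [hMdef]
    exact_mod_cast Fintype.card_pos
  have hD : (0:ℝ) < (M ^ 2) ^ r := by positivity
  have run_eq : ∀ (b : Bool) (cs : Fin r → Coins × Coins),
      runAdaptive Eval q b (List.ofFn cs)
        = List.foldl (hstep Eval q) [] (List.ofFn fun j => (b, cs j)) := by
    intro b cs
    unfold runAdaptive
    rw [show (List.ofFn fun j => (b, cs j)) = (List.ofFn cs).map (fun c => (b, c)) by
      rw [List.map_ofFn]; rfl, List.foldl_map]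
    rfl
  have hcardfun : ((Fintype.card (Fin r → Coins × Coins) : ℝ)) = (M ^ 2) ^ r := by
    simp [hMdef, Fintype.card_fun, Fintype.card_prod]
    push_cast
    ring
  have key : adaptSucc Eval r q guess
      = 1 / 2 + (hybS Eval q guess true r [] - hybS Eval q guess false r []) / 2 := by
    unfold adaptSucc
    rw [Fintype.sum_bool]
    have ht : ∑ cs : Fin r → Coins × Coins,
        (if guess (runAdaptive Eval q true (List.ofFn cs)) = true then (1:ℝ) else 0)
        = hybS Eval q guess true r [] * (M ^ 2) ^ r := by
      unfold hybS
      rw [div_mul_cancel₀ _ (ne_of_gt hD)]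
      exact Finset.sum_congr rfl fun cs _ => by rw [run_eq]
    have hf : ∑ cs : Fin r → Coins × Coins,
        (if guess (runAdaptive Eval q false (List.ofFn cs)) = false then (1:ℝ) else 0)
        = (M ^ 2) ^ r - hybS Eval q guess false r [] * (M ^ 2) ^ r := by
      unfold hybS
      rw [div_mul_cancel₀ _ (ne_of_gt hD)]
      rw [show ((M ^ 2) ^ r : ℝ) = ∑ _cs : Fin r → Coins × Coins, (1:ℝ) by
        rw [Finset.sum_const, Finset.card_univ, nsmul_eq_mul, mul_one, hcardfun]]
      rw [← Finset.sum_sub_distrib]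
      refine Finset.sum_congr rfl fun cs _ => ?_
      rw [run_eq]
      cases hb : guess (List.foldl (hstep Eval q) [] (List.ofFn fun j => (false, cs j))) <;>
        simp
    rw [ht, hf]
    have hden : (2 * ((Fintype.card Coins : ℝ) ^ 2) ^ r) = 2 * (M ^ 2) ^ r := by
      rw [hMdef]
    rw [hden]
    field_simp
    ring
  rw [key]
  have hb := hyb_bound Eval q guess ε hε hsingle r []
  calc |1 / 2 + (hybS Eval q guess true r [] - hybS Eval q guess false r []) / 2 - 1 / 2|
      = |hybS Eval q guess true r [] - hybS Eval q guess false r []| / 2 := by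
        rw [show (1:ℝ) / 2 + (hybS Eval q guess true r [] - hybS Eval q guess false r []) / 2
            - 1 / 2 = (hybS Eval q guess true r [] - hybS Eval q guess false r []) / 2 by ring]
        rw [abs_div]
        norm_num
    _ ≤ (2 * r * ε) / 2 := by linarith
    _ = r * ε := by ring
end
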